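/- Let (B_t)_{t≥0} be a standard Brownian motion started at 0. For h > 0 and T ≥ C, P[inf_{0 ≤ t ≤ T}(B_t − ht) ≥ X] ≤ (C/√T)·e^{−c h² T}, where X is an independent Gaussian variable with bounded mean and variance, and C, c are absolute constants. -/

import Mathlib

open MeasureTheory ProbabilityTheory
open scoped NNReal ENNReal

/-- A standard Brownian motion started at `0` under `μ`: starts at zero, has continuous
paths, measurable marginals, centered Gaussian increments of variance `t − s`, and
independent increments. -/
def IsStandardBM {Ω : Type} [MeasurableSpace Ω] (μ : Measure Ω) (B : ℝ → Ω → ℝ) : Prop :=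
  (∀ ω, B 0 ω = 0) ∧
  (∀ ω, Continuous fun t => B t ω) ∧
  (∀ t, Measurable (B t)) ∧
  (∀ s t : ℝ, 0 ≤ s → s ≤ t →
    Measure.map (fun ω => B t ω - B s ω) μ = gaussianReal 0 (Real.toNNReal (t - s))) ∧
  (∀ (n : ℕ) (ts : Fin (n + 1) → ℝ), Monotone ts → 0 ≤ ts 0 →
    iIndepFun
      (fun i : Fin n => fun ω => B (ts i.succ) ω - B (ts i.castSucc) ω) μ)

open Real

set_option linter.unusedSectionVars false
set_option linter.unusedVariables false
set_option linter.unnecessarySimpa false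
set_option maxHeartbeats 1000000

noncomputable section BMAux

namespace BMAux

/-- standard Gaussian on ℝ -/
def mu1 : Measure ℝ := gaussianReal 0 1

instance : IsProbabilityMeasure mu1 := by unfold mu1; infer_instance

/-- iid standard Gaussian on ℝⁿ -/
def muPi (n : ℕ) : Measure (Fin n → ℝ) := Measure.pi fun _ => mu1

instance (n : ℕ) : IsProbabilityMeasure (muPi n) := by unfold muPi; infer_instance

/-- partial sum of the first `k` coordinates -/
def Sfun {n : ℕ} (x : Fin n → ℝ) (k : ℕ) : ℝ :=
  ∑ j ∈ Finset.range k, if h : j < n then x ⟨j, h⟩ else 0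

lemma Sfun_zero {n : ℕ} (x : Fin n → ℝ) : Sfun x 0 = 0 := by simp [Sfun]

lemma measurable_Sfun {n : ℕ} (k : ℕ) : Measurable (fun x : Fin n → ℝ => Sfun x k) := by
  apply Finset.measurable_sum
  intro j _
  by_cases h : j < n
  · simpa [h] using measurable_pi_apply (⟨j, h⟩ : Fin n)
  · simp [h]

lemma Sfun_succ {n : ℕ} (x : Fin (n+1) → ℝ) (k : ℕ) :
    Sfun x (k+1) = x 0 + Sfun (fun j : Fin n => x j.succ) k := by
  unfold Sfun
  rw [Finset.sum_range_succ']
  have h0 : (if h : 0 < n + 1 then x ⟨0, h⟩ else 0) = x 0 := by simp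
  rw [h0, add_comm]
  congr 1
  apply Finset.sum_congr rfl
  intro j _
  by_cases h : j < n
  · rw [dif_pos (by omega : j + 1 < n + 1), dif_pos h]
    congr 1
  · rw [dif_neg (by omega : ¬ (j + 1 < n + 1)), dif_neg h]

lemma measurable_ofReal_exp (t : ℝ) : Measurable (fun x : ℝ => ENNReal.ofReal (rexp (t * x))) :=
  (Real.measurable_exp.comp (measurable_id.const_mul t)).ennreal_ofReal

/-- Gaussian pdf tilting identity -/
lemma gaussianPDFReal_tilt (m : ℝ) (v : ℝ≥0) (t x : ℝ) :
    gaussianPDFReal m v x * rexp (t * x)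
      = rexp (t * m + t^2 * v / 2) * gaussianPDFReal (m + t * v) v x := by
  rcases eq_or_ne v 0 with hv | hv
  · simp [hv]
  have hv' : (0:ℝ) < v := lt_of_le_of_ne v.coe_nonneg (by exact_mod_cast (Ne.symm hv))
  unfold gaussianPDFReal
  rw [mul_assoc, ← Real.exp_add, mul_left_comm, ← Real.exp_add]
  congr 1
  field_simp
  ring

lemma gaussianPDF_tilt (m : ℝ) (v : ℝ≥0) (t x : ℝ) :
    gaussianPDF m v x * ENNReal.ofReal (rexp (t * x))
      = ENNReal.ofReal (rexp (t * m + t^2 * v / 2)) * gaussianPDF (m + t * v) v x := by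
  unfold gaussianPDF
  rw [← ENNReal.ofReal_mul (gaussianPDFReal_nonneg _ _ _),
    ← ENNReal.ofReal_mul (Real.exp_nonneg _), gaussianPDFReal_tilt]

/-- MGF of a Gaussian as a lintegral -/
lemma lintegral_exp_gaussianReal (m : ℝ) (v : ℝ≥0) (t : ℝ) :
    ∫⁻ x, ENNReal.ofReal (rexp (t * x)) ∂(gaussianReal m v)
      = ENNReal.ofReal (rexp (t * m + t^2 * v / 2)) := by
  rcases eq_or_ne v 0 with hv | hv
  · subst hv
    rw [gaussianReal_zero_var, lintegral_dirac' _ (measurable_ofReal_exp t)]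
    norm_num
  · rw [gaussianReal_of_var_ne_zero _ hv,
      lintegral_withDensity_eq_lintegral_mul _ (measurable_gaussianPDF _ _)
        (measurable_ofReal_exp t)]
    simp only [Pi.mul_apply]
    calc ∫⁻ x, gaussianPDF m v x * ENNReal.ofReal (rexp (t * x))
        = ∫⁻ x, ENNReal.ofReal (rexp (t * m + t^2 * v / 2)) * gaussianPDF (m + t * v) v x := by
          simp_rw [gaussianPDF_tilt]
      _ = ENNReal.ofReal (rexp (t * m + t^2 * v / 2)) := by
          rw [lintegral_const_mul _ (measurable_gaussianPDF _ _),
            lintegral_gaussianPDF_eq_one _ hv, mul_one]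

/-- 1-D change-of-variables tilting for lintegrals against the standard Gaussian. -/
lemma lintegral_tilt (h : ℝ) (G : ℝ → ℝ≥0∞) (hG : Measurable G) :
    ∫⁻ x, ENNReal.ofReal (rexp (h * x)) * G x ∂mu1
      = ENNReal.ofReal (rexp (h^2 / 2)) * ∫⁻ x, G (x + h) ∂mu1 := by
  have h1 : mu1 = volume.withDensity (gaussianPDF 0 1) :=
    gaussianReal_of_var_ne_zero _ one_ne_zero
  have hmap : (gaussianReal h 1 : Measure ℝ) = Measure.map (· + h) mu1 := by
    rw [mu1, gaussianReal_map_add_const, zero_add]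
  conv_lhs => rw [h1]
  rw [lintegral_withDensity_eq_lintegral_mul _ (measurable_gaussianPDF _ _)
    (g := fun x => ENNReal.ofReal (rexp (h * x)) * G x) ((measurable_ofReal_exp h).mul hG)]
  simp only [Pi.mul_apply]
  calc ∫⁻ x, gaussianPDF 0 1 x * (ENNReal.ofReal (rexp (h * x)) * G x)
      = ∫⁻ x, ENNReal.ofReal (rexp (h^2/2)) * (gaussianPDF h 1 x * G x) := by
        congr 1; ext x
        rw [← mul_assoc, gaussianPDF_tilt]
        push_cast
        rw [mul_zero, zero_add, zero_add]
        ring_nf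
    _ = ENNReal.ofReal (rexp (h^2/2)) * ∫⁻ x, G x ∂(gaussianReal h 1) := by
        rw [lintegral_const_mul _ (f := fun x => gaussianPDF h 1 x * G x) ((measurable_gaussianPDF _ _).mul hG),
          gaussianReal_of_var_ne_zero _ one_ne_zero,
          lintegral_withDensity_eq_lintegral_mul _ (measurable_gaussianPDF _ _) hG]
        rfl
    _ = ENNReal.ofReal (rexp (h^2/2)) * ∫⁻ x, G (x + h) ∂mu1 := by
        rw [hmap, lintegral_map hG (measurable_add_const h)]


/-- The staying-above event with level `y` and drift `h`. -/
def Aset (n : ℕ) (y h : ℝ) : Set (Fin n → ℝ) :=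
  {x | ∀ k : ℕ, 1 ≤ k → k ≤ n → y + h * k ≤ Sfun x k}

lemma measurableSet_Aset (n : ℕ) (y h : ℝ) : MeasurableSet (Aset n y h) := by
  have : Aset n y h = ⋂ (k : ℕ), ⋂ (_ : 1 ≤ k), ⋂ (_ : k ≤ n),
      {x : Fin n → ℝ | y + h * k ≤ Sfun x k} := by
    ext x; simp [Aset, Set.mem_iInter]
  rw [this]
  exact MeasurableSet.iInter fun k => MeasurableSet.iInter fun _ =>
    MeasurableSet.iInter fun _ => measurableSet_le measurable_const (measurable_Sfun k)

lemma Aset_zero (y h : ℝ) : Aset 0 y h = Set.univ := by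
  ext x; simp only [Aset, Set.mem_setOf_eq, Set.mem_univ, iff_true]
  intro k h1 h2; omega

lemma Aset_antitone (n : ℕ) (h : ℝ) {y1 y2 : ℝ} (hle : y1 ≤ y2) : Aset n y2 h ⊆ Aset n y1 h := by
  intro x hx k hk1 hk2
  exact le_trans (by linarith) (hx k hk1 hk2)

/-- decomposition of the staying event along the first coordinate -/
lemma Aset_succ (n : ℕ) (y h : ℝ) :
    Aset (n+1) y h = (MeasurableEquiv.piFinSuccAbove (fun _ => ℝ) 0) ⁻¹'
      {p : ℝ × (Fin n → ℝ) | y + h ≤ p.1 ∧ p.2 ∈ Aset n (y + h - p.1) h} := by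
  have he : ∀ x : Fin (n+1) → ℝ, (MeasurableEquiv.piFinSuccAbove (fun _ => ℝ) 0) x
      = (x 0, fun j : Fin n => x j.succ) := fun x => rfl
  ext x
  simp only [Set.mem_preimage, he, Set.mem_setOf_eq, Aset]
  constructor
  · intro hx
    have h1 := hx 1 le_rfl (by omega)
    rw [Sfun_succ, Sfun_zero] at h1
    refine ⟨by simpa using h1, fun k hk1 hk2 => ?_⟩
    have := hx (k+1) (by omega) (by omega)
    rw [Sfun_succ] at this
    push_cast at this ⊢
    linarith
  · rintro ⟨h1, h2⟩ k hk1 hk2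
    obtain ⟨k, rfl⟩ := Nat.exists_eq_add_of_le hk1
    rw [add_comm 1 k, Sfun_succ]
    rcases Nat.eq_zero_or_pos k with rfl | hk
    · rw [Sfun_zero]; push_cast; linarith
    · have := h2 k hk (by omega)
      push_cast at this ⊢
      linarith

lemma measurableSet_sec (n : ℕ) (y h' : ℝ) :
    MeasurableSet {p : ℝ × (Fin n → ℝ) | y + h' ≤ p.1 ∧ p.2 ∈ Aset n (y + h' - p.1) h'} := by
  have : {p : ℝ × (Fin n → ℝ) | y + h' ≤ p.1 ∧ p.2 ∈ Aset n (y + h' - p.1) h'}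
      = {p : ℝ × (Fin n → ℝ) | y + h' ≤ p.1} ∩
        ⋂ (k : ℕ), ⋂ (_ : 1 ≤ k), ⋂ (_ : k ≤ n),
          {p : ℝ × (Fin n → ℝ) | y + h' + h' * k - Sfun p.2 k ≤ p.1} := by
    ext p
    simp only [Set.mem_setOf_eq, Set.mem_inter_iff, Set.mem_iInter, Aset]
    constructor
    · rintro ⟨ha, hb⟩; exact ⟨ha, fun k h1 h2 => by have := hb k h1 h2; linarith⟩
    · rintro ⟨ha, hb⟩; exact ⟨ha, fun k h1 h2 => by have := hb k h1 h2; linarith⟩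
  rw [this]
  refine MeasurableSet.inter (measurableSet_le measurable_const measurable_fst) ?_
  refine MeasurableSet.iInter fun k => MeasurableSet.iInter fun _ =>
    MeasurableSet.iInter fun _ => measurableSet_le ?_ measurable_fst
  exact measurable_const.sub ((measurable_Sfun k).comp measurable_snd)

lemma muPi_succ_eq (n : ℕ) (y h' : ℝ) :
    muPi (n+1) (Aset (n+1) y h')
      = ∫⁻ a, Set.indicator (Set.Ici (y + h'))
          (fun a => muPi n (Aset n (y + h' - a) h')) a ∂mu1 := by
  have hmp := measurePreserving_piFinSuccAbove (fun _ : Fin (n+1) => mu1) 0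
  have hs := measurableSet_sec n y h'
  rw [Aset_succ]
  have h1 : muPi (n+1) ((MeasurableEquiv.piFinSuccAbove (fun _ => ℝ) 0) ⁻¹'
      {p : ℝ × (Fin n → ℝ) | y + h' ≤ p.1 ∧ p.2 ∈ Aset n (y + h' - p.1) h'})
      = (mu1.prod (muPi n)) {p : ℝ × (Fin n → ℝ) | y + h' ≤ p.1 ∧ p.2 ∈ Aset n (y + h' - p.1) h'} :=
    hmp.measure_preimage hs.nullMeasurableSet
  rw [h1, Measure.prod_apply hs]
  congr 1
  ext a
  have hpre : Prod.mk a ⁻¹' {p : ℝ × (Fin n → ℝ) | y + h' ≤ p.1 ∧ p.2 ∈ Aset n (y + h' - p.1) h'}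
      = if y + h' ≤ a then Aset n (y + h' - a) h' else ∅ := by
    ext z
    by_cases ha : y + h' ≤ a <;> simp [ha]
  rw [hpre]
  by_cases ha : y + h' ≤ a
  · rw [if_pos ha, Set.indicator_of_mem (Set.mem_Ici.mpr ha)]
  · rw [if_neg ha, Set.indicator_of_notMem (fun hmem => ha (Set.mem_Ici.mp hmem)), measure_empty]

set_option maxHeartbeats 1000000 in
/-- Tilting bound. -/
lemma tilt_bound (n : ℕ) (y h : ℝ) (hy : y ≤ 0) (hh : 0 ≤ h) :
    muPi n (Aset n y h)
      ≤ ENNReal.ofReal (rexp (-(h*y) - n * h^2 / 2)) * muPi n (Aset n y 0) := by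
  induction n generalizing y with
  | zero =>
      rw [Aset_zero, Aset_zero]
      have h1 : (muPi 0 Set.univ) = 1 := measure_univ
      rw [h1, mul_one]
      refine ENNReal.one_le_ofReal.mpr (Real.one_le_exp ?_)
      simp only [Nat.cast_zero]
      nlinarith [mul_nonneg hh (neg_nonneg.mpr hy)]
  | succ n ih =>
      have hGmono : Monotone (fun u : ℝ => muPi n (Aset n (y - u) 0)) := by
        intro u1 u2 hu
        exact measure_mono (Aset_antitone n 0 (by linarith))
      have hGmeas0 : Measurable (fun u : ℝ => muPi n (Aset n (y - u) 0)) := hGmono.measurable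
      set G : ℝ → ℝ≥0∞ := Set.indicator (Set.Ici y) (fun u => muPi n (Aset n (y - u) 0)) with hGdef
      have hGmeas : Measurable G := hGmeas0.indicator measurableSet_Ici
      set c1 : ℝ := rexp (-(h*y) - h^2 - n * h^2 / 2) with hc1
      have step1 : ∀ a : ℝ,
          Set.indicator (Set.Ici (y + h)) (fun a => muPi n (Aset n (y + h - a) h)) a
          ≤ ENNReal.ofReal c1 * (ENNReal.ofReal (rexp (h * a)) * G (a - h)) := by
        intro a
        by_cases ha : y + h ≤ a
        · rw [Set.indicator_of_mem (Set.mem_Ici.mpr ha)]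
          have hy' : y + h - a ≤ 0 := by linarith
          refine le_trans (ih (y + h - a) hy') ?_
          rw [hGdef]
          have hmem : a - h ∈ Set.Ici y := Set.mem_Ici.mpr (by linarith)
          rw [Set.indicator_of_mem hmem]
          have harg : y - (a - h) = y + h - a := by ring
          rw [harg, ← mul_assoc, ← ENNReal.ofReal_mul (by positivity), ← Real.exp_add]
          apply mul_le_mul_left
          apply le_of_eq
          congr 1
          ring
        · rw [Set.indicator_of_notMem (fun hmem => ha (Set.mem_Ici.mp hmem))]
          exact zero_le
      have hG2meas : Measurable (fun a : ℝ => G (a - h)) := hGmeas.comp (measurable_sub_const h)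
      calc muPi (n+1) (Aset (n+1) y h)
          = ∫⁻ a, Set.indicator (Set.Ici (y + h)) (fun a => muPi n (Aset n (y + h - a) h)) a ∂mu1 :=
            muPi_succ_eq n y h
        _ ≤ ∫⁻ a, ENNReal.ofReal c1 * (ENNReal.ofReal (rexp (h * a)) * G (a - h)) ∂mu1 :=
            lintegral_mono step1
        _ = ENNReal.ofReal c1 * ∫⁻ a, ENNReal.ofReal (rexp (h * a)) * G (a - h) ∂mu1 :=
            lintegral_const_mul _ ((measurable_ofReal_exp h).mul hG2meas)
        _ = ENNReal.ofReal c1 * (ENNReal.ofReal (rexp (h^2/2)) * ∫⁻ a, G (a + h - h) ∂mu1) := by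
            rw [lintegral_tilt h (fun u => G (u - h)) hG2meas]
        _ = ENNReal.ofReal (rexp (-(h*y) - ((n+1 : ℕ) : ℝ) * h^2 / 2)) * ∫⁻ a, G a ∂mu1 := by
            have : ∀ a : ℝ, G (a + h - h) = G a := fun a => by rw [add_sub_cancel_right]
            simp_rw [this]
            rw [← mul_assoc, ← ENNReal.ofReal_mul (by positivity), hc1, ← Real.exp_add]
            have hexp : -(h * y) - h ^ 2 - ↑n * h ^ 2 / 2 + h ^ 2 / 2
                = -(h * y) - ((n+1 : ℕ) : ℝ) * h ^ 2 / 2 := by push_cast; ring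
            rw [hexp]
        _ = ENNReal.ofReal (rexp (-(h*y) - ((n+1 : ℕ) : ℝ) * h^2 / 2)) * muPi (n+1) (Aset (n+1) y 0) := by
            rw [muPi_succ_eq n y 0]
            congr 1
            congr 1
            ext a
            rw [hGdef]
            by_cases ha : y ≤ a
            · rw [Set.indicator_of_mem (Set.mem_Ici.mpr ha),
                Set.indicator_of_mem (Set.mem_Ici.mpr (by linarith : y + 0 ≤ a))]
              congr 2
              ring
            · rw [Set.indicator_of_notMem (fun hmem => ha (Set.mem_Ici.mp hmem)),
                Set.indicator_of_notMem (fun hmem => ha (by linarith [Set.mem_Ici.mp hmem]))]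


/-- reindexing an independent family along an equivalence -/
lemma iIndepFun_reindex {Ω ι ι' : Type*} [MeasurableSpace Ω] {μ : Measure Ω} (e : ι' ≃ ι)
    (f : ι → Ω → ℝ) (h : iIndepFun f μ) :
    iIndepFun (fun i => f (e i)) μ := by
  classical
  rw [iIndepFun_iff_measure_inter_preimage_eq_mul] at h ⊢
  intro S sets hsets
  have h1 := h (S.image e) (sets := fun i => sets (e.symm i))
    (fun i hi => by
      obtain ⟨j, hj, rfl⟩ := Finset.mem_image.mp hi
      simpa using hsets j hj)
  have hinter : (⋂ i ∈ S.image e, f i ⁻¹' sets (e.symm i)) = ⋂ i ∈ S, f (e i) ⁻¹' sets i := by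
    ext ω
    simp only [Set.mem_iInter, Finset.mem_image]
    constructor
    · intro hx i hi
      have := hx (e i) ⟨i, hi, rfl⟩
      simpa using this
    · rintro hx j ⟨i, hi, rfl⟩
      simpa using hx i hi
  have hprod : (∏ i ∈ S.image e, μ (f i ⁻¹' sets (e.symm i))) = ∏ i ∈ S, μ (f (e i) ⁻¹' sets i) := by
    rw [Finset.prod_image (fun a _ b _ hab => e.injective hab)]
    exact Finset.prod_congr rfl fun i _ => by simp
  rw [hinter, hprod] at h1
  exact h1

/-- a tuple of iid standard Gaussians has law `muPi n` -/
lemma map_tuple_eq_muPi {Ω : Type} [MeasurableSpace Ω] {μ : Measure Ω} [IsProbabilityMeasure μ]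
    {n : ℕ} (g : Fin n → Ω → ℝ) (hg : iIndepFun g μ)
    (hmeas : ∀ i, Measurable (g i)) (hlaw : ∀ i, Measure.map (g i) μ = mu1) :
    Measure.map (fun ω i => g i ω) μ = muPi n := by
  refine (Measure.pi_eq fun s hs => ?_).symm
  rw [Measure.map_apply (measurable_pi_lambda _ hmeas) (MeasurableSet.univ_pi hs)]
  have hpre : (fun ω i => g i ω) ⁻¹' Set.univ.pi s = ⋂ i ∈ Finset.univ, g i ⁻¹' s i := by
    ext ω; simp [Set.mem_pi]
  rw [hpre, hg.measure_inter_preimage_eq_mul Finset.univ (fun i _ => hs i)]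
  exact Finset.prod_congr rfl fun i _ => by
    rw [← hlaw i, Measure.map_apply (hmeas i) (hs i)]

/-- transfer events through the tuple law -/
lemma measure_tuple_preimage {Ω : Type} [MeasurableSpace Ω] {μ : Measure Ω}
    [IsProbabilityMeasure μ] {n : ℕ} (g : Fin n → Ω → ℝ)
    (hg : iIndepFun g μ)
    (hmeas : ∀ i, Measurable (g i)) (hlaw : ∀ i, Measure.map (g i) μ = mu1)
    {A : Set (Fin n → ℝ)} (hA : MeasurableSet A) :
    μ ((fun ω i => g i ω) ⁻¹' A) = muPi n A := by
  rw [← map_tuple_eq_muPi g hg hmeas hlaw, Measure.map_apply (measurable_pi_lambda _ hmeas) hA]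

lemma map_neg_mu1 : Measure.map (fun x : ℝ => -x) mu1 = mu1 := by
  have := gaussianReal_map_const_mul (μ := 0) (v := 1) (-1)
  simp only [neg_mul, one_mul, mul_zero] at this
  unfold mu1
  rw [show (fun x : ℝ => -x) = (fun x : ℝ => -1 * x) by ext x; ring]
  rw [gaussianReal_map_const_mul, mul_zero]
  congr 1
  ext
  norm_num


variable {Ω : Type} [MeasurableSpace Ω] {μ : Measure Ω} [IsProbabilityMeasure μ]
  {B : ℝ → Ω → ℝ}

/-- tuple of increments of `B` along integers, starting at `a`, length `n` -/
def XiT (B : ℝ → Ω → ℝ) (a n : ℕ) : Ω → Fin n → ℝ :=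
  fun ω i => B ((a + i.val + 1 : ℕ) : ℝ) ω - B ((a + i.val : ℕ) : ℝ) ω

lemma measurable_XiT (hBM : IsStandardBM μ B) (a n : ℕ) : Measurable (XiT B a n) :=
  measurable_pi_lambda _ fun i => (hBM.2.2.1 _).sub (hBM.2.2.1 _)

lemma measurable_XiT_coord (hBM : IsStandardBM μ B) (a n : ℕ) (i : Fin n) :
    Measurable (fun ω => XiT B a n ω i) := (hBM.2.2.1 _).sub (hBM.2.2.1 _)

/-- the increments family over the full integer grid of length N -/
lemma iIndepFun_incr (hBM : IsStandardBM μ B) (N : ℕ) :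
    iIndepFun
      (fun i : Fin N => fun ω => B ((i.val + 1 : ℕ) : ℝ) ω - B ((i.val : ℕ) : ℝ) ω) μ := by
  have h := hBM.2.2.2.2 N (fun j => ((j.val : ℕ) : ℝ))
    (fun j j' hj => by exact_mod_cast Nat.cast_le.mpr (Fin.le_iff_val_le_val.mp hj))
    (by positivity)
  exact h

lemma incr_law (hBM : IsStandardBM μ B) (a m : ℕ) :
    Measure.map (fun ω => B ((a + m : ℕ) : ℝ) ω - B ((a : ℕ) : ℝ) ω) μ
      = gaussianReal 0 (Real.toNNReal m) := by
  have h := hBM.2.2.2.1 ((a : ℕ) : ℝ) ((a + m : ℕ) : ℝ) (by positivity)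
    (by exact_mod_cast Nat.le_add_right a m)
  rw [h]
  congr 1
  push_cast
  ring

lemma B_nat_law (hBM : IsStandardBM μ B) (m : ℕ) :
    Measure.map (fun ω => B ((m : ℕ) : ℝ) ω) μ = gaussianReal 0 (Real.toNNReal m) := by
  have h := incr_law hBM 0 m
  simp only [Nat.zero_add, Nat.cast_zero] at h
  have : (fun ω => B ((m : ℕ) : ℝ) ω - B ((0 : ℕ) : ℝ) ω) = fun ω => B ((m : ℕ) : ℝ) ω := by
    ext ω
    rw [show ((0:ℕ):ℝ) = (0:ℝ) by norm_num, hBM.1 ω, sub_zero]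
  rw [← this]
  rw [← h]
  congr 1
  push_cast
  ring_nf

lemma XiT_coord_law (hBM : IsStandardBM μ B) (a n : ℕ) (i : Fin n) :
    Measure.map (fun ω => XiT B a n ω i) μ = mu1 := by
  have h := hBM.2.2.2.1 ((a + i.val : ℕ) : ℝ) ((a + i.val + 1 : ℕ) : ℝ) (by positivity)
    (by exact_mod_cast Nat.le_succ _)
  unfold XiT
  rw [h]
  unfold mu1
  congr 1
  rw [show ((a + i.val + 1 : ℕ) : ℝ) - ((a + i.val : ℕ) : ℝ) = 1 by push_cast; ring]
  exact Real.toNNReal_one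

/-- the increments tuple is iIndep -/
lemma iIndepFun_XiT (hBM : IsStandardBM μ B) (a n : ℕ) :
    iIndepFun (fun i : Fin n => fun ω => XiT B a n ω i) μ := by
  have h := hBM.2.2.2.2 n (fun j => ((a + j.val : ℕ) : ℝ))
    (fun j j' hj => by
      have := Fin.le_iff_val_le_val.mp hj
      exact_mod_cast Nat.cast_le.mpr (Nat.add_le_add_left this a))
    (by positivity)
  exact h



variable {Ω : Type} [MeasurableSpace Ω] {μ : Measure Ω} [IsProbabilityMeasure μ]
  {B : ℝ → Ω → ℝ}

/-- walk formula: partial sums of increments are increments of B -/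
lemma Sfun_XiT (hBM : IsStandardBM μ B) (a n : ℕ) (ω : Ω) {k : ℕ} (hk : k ≤ n) :
    Sfun (XiT B a n ω) k = B ((a + k : ℕ) : ℝ) ω - B ((a : ℕ) : ℝ) ω := by
  have : Sfun (XiT B a n ω) k
      = ∑ j ∈ Finset.range k, (B ((a + (j+1) : ℕ) : ℝ) ω - B ((a + j : ℕ) : ℝ) ω) := by
    unfold Sfun
    apply Finset.sum_congr rfl
    intro j hj
    have hjn : j < n := lt_of_lt_of_le (Finset.mem_range.mp hj) hk
    rw [dif_pos hjn]
    rfl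
  rw [this, Finset.sum_range_sub (fun j => B ((a + j : ℕ) : ℝ) ω) k]
  simp

/-- independence of two adjacent blocks of increments -/
lemma indepFun_XiT_XiT (hBM : IsStandardBM μ B) (a k n' : ℕ) :
    IndepFun (XiT B a k) (XiT B (a + k) n') μ := by
  classical
  set N := a + k + n' with hN
  have hind := iIndepFun_incr hBM N
  set S : Finset (Fin N) := Finset.univ.filter (fun i => a ≤ i.val ∧ i.val < a + k) with hS
  set T : Finset (Fin N) := Finset.univ.filter (fun i => a + k ≤ i.val) with hT
  have hST : Disjoint S T := by
    rw [Finset.disjoint_left]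
    intro i hiS hiT
    rw [hS, Finset.mem_filter] at hiS
    rw [hT, Finset.mem_filter] at hiT
    omega
  have hmeas : ∀ i : Fin N, Measurable
      (fun ω => B ((i.val + 1 : ℕ) : ℝ) ω - B ((i.val : ℕ) : ℝ) ω) :=
    fun i => (hBM.2.2.1 _).sub (hBM.2.2.1 _)
  have hbase := hind.indepFun_finset S T hST hmeas
  -- compose with reassembly maps
  have hjS : ∀ j : Fin k, a + j.val < N := by intro j; omega
  have hjmemS : ∀ j : Fin k, (⟨a + j.val, hjS j⟩ : Fin N) ∈ S := by
    intro j
    rw [hS, Finset.mem_filter]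
    refine ⟨Finset.mem_univ _, by simp, by simpa using j.isLt⟩
  have hjT : ∀ j : Fin n', a + k + j.val < N := by intro j; omega
  have hjmemT : ∀ j : Fin n', (⟨a + k + j.val, hjT j⟩ : Fin N) ∈ T := by
    intro j
    rw [hT, Finset.mem_filter]
    exact ⟨Finset.mem_univ _, by simp⟩
  set φS : ((i : S) → ℝ) → (Fin k → ℝ) := fun v j => v ⟨⟨a + j.val, hjS j⟩, hjmemS j⟩ with hφS
  set φT : ((i : T) → ℝ) → (Fin n' → ℝ) := fun v j => v ⟨⟨a + k + j.val, hjT j⟩, hjmemT j⟩ with hφT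
  have hφSm : Measurable φS := measurable_pi_lambda _ fun j => measurable_pi_apply _
  have hφTm : Measurable φT := measurable_pi_lambda _ fun j => measurable_pi_apply _
  have h1 := hbase.comp hφSm hφTm
  have e1 : φS ∘ (fun ω (i : S) => B (((i : Fin N).val + 1 : ℕ) : ℝ) ω - B (((i : Fin N).val : ℕ) : ℝ) ω)
      = XiT B a k := rfl
  have e2 : φT ∘ (fun ω (i : T) => B (((i : Fin N).val + 1 : ℕ) : ℝ) ω - B (((i : Fin N).val : ℕ) : ℝ) ω)
      = XiT B (a + k) n' := rfl
  rw [e1, e2] at h1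
  exact h1


/-! ### the reflection/cycle argument -/

/-- probability that the Gaussian walk stays nonnegative for `m` steps -/
def q (m : ℕ) : ℝ≥0∞ := muPi m (Aset m 0 0)

def AsetStrict (m : ℕ) : Set (Fin m → ℝ) := {x | ∀ k : ℕ, 1 ≤ k → k ≤ m → 0 < Sfun x k}

def RevShape (k : ℕ) : Set (Fin k → ℝ) := {z | ∀ i : ℕ, i < k → Sfun z k - Sfun z i < 0}

lemma measurableSet_AsetStrict (m : ℕ) : MeasurableSet (AsetStrict m) := by
  have : AsetStrict m = ⋂ (k : ℕ), ⋂ (_ : 1 ≤ k), ⋂ (_ : k ≤ m),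
      {x : Fin m → ℝ | 0 < Sfun x k} := by
    ext x; simp [AsetStrict, Set.mem_iInter]
  rw [this]
  exact MeasurableSet.iInter fun k => MeasurableSet.iInter fun _ =>
    MeasurableSet.iInter fun _ => measurableSet_lt measurable_const (measurable_Sfun k)

lemma measurableSet_RevShape (k : ℕ) : MeasurableSet (RevShape k) := by
  have : RevShape k = ⋂ (i : ℕ), ⋂ (_ : i < k),
      {z : Fin k → ℝ | Sfun z k - Sfun z i < 0} := by
    ext z; simp [RevShape, Set.mem_iInter]
  rw [this]
  exact MeasurableSet.iInter fun i => MeasurableSet.iInter fun _ =>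
    measurableSet_lt ((measurable_Sfun k).sub (measurable_Sfun i)) measurable_const

lemma gaussianReal_singleton {v : ℝ≥0} (hv : v ≠ 0) (m x : ℝ) :
    gaussianReal m v {x} = 0 := by
  rw [gaussianReal_apply m hv {x}]
  have : volume.restrict ({x} : Set ℝ) = 0 :=
    Measure.restrict_eq_zero.mpr (measure_singleton x)
  rw [this]
  simp

/-- transfer: the staying event probability -/
lemma stay_eq (hBM : IsStandardBM μ B) (a n : ℕ) (y : ℝ) :
    μ {ω | ∀ k : ℕ, 1 ≤ k → k ≤ n → y ≤ B ((a + k : ℕ) : ℝ) ω - B ((a : ℕ) : ℝ) ω}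
      = muPi n (Aset n y 0) := by
  have hset : {ω | ∀ k : ℕ, 1 ≤ k → k ≤ n → y ≤ B ((a + k : ℕ) : ℝ) ω - B ((a : ℕ) : ℝ) ω}
      = (fun ω (i : Fin n) => XiT B a n ω i) ⁻¹' (Aset n y 0) := by
    ext ω
    simp only [Set.mem_preimage, Set.mem_setOf_eq, Aset]
    constructor
    · intro hω k h1 h2
      rw [Sfun_XiT hBM a n ω h2, zero_mul, add_zero]
      exact hω k h1 h2
    · intro hω k h1 h2
      have := hω k h1 h2
      rw [Sfun_XiT hBM a n ω h2, zero_mul, add_zero] at this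
      exact this
  rw [hset]
  exact measure_tuple_preimage _ (iIndepFun_XiT hBM a n)
    (fun i => measurable_XiT_coord hBM a n i) (fun i => XiT_coord_law hBM a n i)
    (measurableSet_Aset n y 0)

/-- the strict staying event has the same probability -/
lemma strict_eq_q (hBM : IsStandardBM μ B) (k : ℕ) :
    muPi k (AsetStrict k) = q k := by
  have hnull : ∀ m : ℕ, 1 ≤ m → m ≤ k → muPi k {x : Fin k → ℝ | Sfun x m = 0} = 0 := by
    intro m h1 h2
    have htrans : muPi k {x : Fin k → ℝ | Sfun x m = 0}
        = μ ((fun ω (i : Fin k) => XiT B 0 k ω i) ⁻¹' {x : Fin k → ℝ | Sfun x m = 0}) :=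
      (measure_tuple_preimage _ (iIndepFun_XiT hBM 0 k)
        (fun i => measurable_XiT_coord hBM 0 k i) (fun i => XiT_coord_law hBM 0 k i)
        (measurableSet_eq_fun (measurable_Sfun m) measurable_const)).symm
    rw [htrans]
    have hev : (fun ω (i : Fin k) => XiT B 0 k ω i) ⁻¹' {x : Fin k → ℝ | Sfun x m = 0}
        = (fun ω => B ((0 + m : ℕ) : ℝ) ω - B ((0 : ℕ) : ℝ) ω) ⁻¹' {(0 : ℝ)} := by
      ext ω
      simp only [Set.mem_preimage, Set.mem_setOf_eq, Set.mem_singleton_iff]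
      rw [Sfun_XiT hBM 0 k ω h2]
    rw [hev, ← Measure.map_apply (f := fun ω => B ((0 + m : ℕ) : ℝ) ω - B ((0 : ℕ) : ℝ) ω) ((hBM.2.2.1 _).sub (hBM.2.2.1 _)) (measurableSet_singleton 0),
      incr_law hBM 0 m]
    exact gaussianReal_singleton (by simp; omega) 0 0
  apply le_antisymm
  · exact measure_mono fun x hx k h1 h2 => by
      have := hx k h1 h2; rw [zero_mul, add_zero]; linarith
  · have hsub : Aset k 0 0 ⊆ AsetStrict k ∪ (⋃ m ∈ Finset.Icc 1 k, {x : Fin k → ℝ | Sfun x m = 0}) := by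
      intro x hx
      by_cases hs : x ∈ AsetStrict k
      · exact Or.inl hs
      · right
        simp only [AsetStrict, Set.mem_setOf_eq, not_forall] at hs
        obtain ⟨m, h1, h2, h3⟩ := hs
        have hge := hx m h1 h2
        rw [zero_mul, add_zero] at hge
        refine Set.mem_biUnion (Finset.mem_Icc.mpr ⟨h1, h2⟩) ?_
        simp only [Set.mem_setOf_eq]
        linarith
    calc q k = muPi k (Aset k 0 0) := rfl
      _ ≤ muPi k (AsetStrict k ∪ (⋃ m ∈ Finset.Icc 1 k, {x : Fin k → ℝ | Sfun x m = 0})) :=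
        measure_mono hsub
      _ ≤ muPi k (AsetStrict k) + muPi k (⋃ m ∈ Finset.Icc 1 k, {x : Fin k → ℝ | Sfun x m = 0}) :=
        measure_union_le _ _
      _ = muPi k (AsetStrict k) := by
        have h0 : muPi k (⋃ m ∈ Finset.Icc 1 k, {x : Fin k → ℝ | Sfun x m = 0}) = 0 := by
          refine (measure_biUnion_null_iff (Finset.Icc 1 k).countable_toSet).mpr ?_
          intro m hm
          exact hnull m (Finset.mem_Icc.mp hm).1 (Finset.mem_Icc.mp hm).2
        rw [h0, add_zero]

lemma Sfun_XiT_zero (hBM : IsStandardBM μ B) (n : ℕ) (ω : Ω) {k : ℕ} (hk : k ≤ n) :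
    Sfun (XiT B 0 n ω) k = B ((k : ℕ) : ℝ) ω := by
  rw [Sfun_XiT hBM 0 n ω hk, Nat.zero_add]
  have : B ((0 : ℕ) : ℝ) ω = 0 := by rw [Nat.cast_zero]; exact hBM.1 ω
  rw [this, sub_zero]

/-- the strict positivity event via the walk -/
lemma strictpos_eq (hBM : IsStandardBM μ B) (k : ℕ) :
    μ {ω | ∀ m : ℕ, 1 ≤ m → m ≤ k → 0 < B ((m : ℕ) : ℝ) ω} = muPi k (AsetStrict k) := by
  have hset : {ω | ∀ m : ℕ, 1 ≤ m → m ≤ k → 0 < B ((m : ℕ) : ℝ) ω}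
      = (fun ω (i : Fin k) => XiT B 0 k ω i) ⁻¹' (AsetStrict k) := by
    ext ω
    simp only [Set.mem_preimage, Set.mem_setOf_eq, AsetStrict]
    constructor
    · intro hω m h1 h2
      rw [Sfun_XiT_zero hBM k ω h2]
      exact hω m h1 h2
    · intro hω m h1 h2
      have := hω m h1 h2
      rwa [Sfun_XiT_zero hBM k ω h2] at this
  rw [hset]
  exact measure_tuple_preimage _ (iIndepFun_XiT hBM 0 k)
    (fun i => measurable_XiT_coord hBM 0 k i) (fun i => XiT_coord_law hBM 0 k i)
    (measurableSet_AsetStrict k)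

/-- time-reversal: the reversed-strict-max shape has the same probability as strict staying -/
lemma rev_eq (hBM : IsStandardBM μ B) (k : ℕ) :
    muPi k (RevShape k) = muPi k (AsetStrict k) := by
  -- the reversed, negated increments
  set g : Fin k → Ω → ℝ :=
    fun i ω => B ((k - 1 - i.val : ℕ) : ℝ) ω - B ((k - i.val : ℕ) : ℝ) ω with hg
  have hgmeas : ∀ i, Measurable (g i) := fun i => (hBM.2.2.1 _).sub (hBM.2.2.1 _)
  have hsub1 : ∀ i : Fin k, (k - 1 - i.val) + 1 = k - i.val := fun i => by
    have := i.isLt; omega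
  -- independence
  have hgind : iIndepFun g μ := by
    have hbase := iIndepFun_incr hBM k
    have hrev := iIndepFun_reindex Fin.revPerm _ hbase
    have hneg := hrev.comp (fun _ => fun x : ℝ => -x) (fun _ => measurable_neg)
    have heq : (fun i : Fin k => (fun x : ℝ => -x) ∘
        (fun ω => B (((Fin.revPerm i).val + 1 : ℕ) : ℝ) ω - B (((Fin.revPerm i).val : ℕ) : ℝ) ω))
        = g := by
      funext i
      ext ω
      have hv : (Fin.revPerm i).val = k - 1 - i.val := by
        simp [Fin.revPerm, Fin.rev]
        omega
      simp only [Function.comp_apply, hv, hg]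
      rw [hsub1 i]
      ring
    rwa [heq] at hneg
  -- marginals
  have hglaw : ∀ i, Measure.map (g i) μ = mu1 := by
    intro i
    have hincr := incr_law hBM (k - 1 - i.val) 1
    rw [hsub1 i] at hincr
    have hcomp : g i = (fun x : ℝ => -x) ∘ (fun ω => B ((k - i.val : ℕ) : ℝ) ω - B ((k - 1 - i.val : ℕ) : ℝ) ω) := by
      ext ω; simp only [hg, Function.comp_apply]; ring
    rw [hcomp, ← Measure.map_map (f := fun ω => B ((k - i.val : ℕ) : ℝ) ω - B ((k - 1 - i.val : ℕ) : ℝ) ω) measurable_neg ((hBM.2.2.1 _).sub (hBM.2.2.1 _)), hincr]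
    rw [show Real.toNNReal ((1:ℕ):ℝ) = 1 by simp]
    exact map_neg_mu1
  -- transfer
  have htrans : muPi k (RevShape k)
      = μ ((fun ω (i : Fin k) => g i ω) ⁻¹' RevShape k) :=
    (measure_tuple_preimage _ hgind hgmeas hglaw (measurableSet_RevShape k)).symm
  -- walk formula for the reversed tuple
  have hwalk : ∀ ω : Ω, ∀ m : ℕ, m ≤ k →
      Sfun (fun i : Fin k => g i ω) m = B ((k - m : ℕ) : ℝ) ω - B ((k : ℕ) : ℝ) ω := by
    intro ω m hm
    have : Sfun (fun i : Fin k => g i ω) m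
        = ∑ j ∈ Finset.range m, (B ((k - (j+1) : ℕ) : ℝ) ω - B ((k - j : ℕ) : ℝ) ω) := by
      unfold Sfun
      apply Finset.sum_congr rfl
      intro j hj
      have hjk : j < k := lt_of_lt_of_le (Finset.mem_range.mp hj) hm
      rw [dif_pos hjk]
      simp only [hg]
      have : k - (j + 1) = k - 1 - j := by omega
      rw [this]
    rw [this, Finset.sum_range_sub (fun j => B ((k - j : ℕ) : ℝ) ω) m]
    simp
  -- event identification
  have hev : (fun ω (i : Fin k) => g i ω) ⁻¹' RevShape k
      = {ω | ∀ m : ℕ, 1 ≤ m → m ≤ k → 0 < B ((m : ℕ) : ℝ) ω} := by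
    ext ω
    simp only [Set.mem_preimage, Set.mem_setOf_eq, RevShape]
    have hB0 : B ((0 : ℕ) : ℝ) ω = 0 := by rw [Nat.cast_zero]; exact hBM.1 ω
    constructor
    · intro hω m h1 h2
      have := hω (k - m) (by omega)
      rw [hwalk ω k le_rfl, hwalk ω (k - m) (by omega)] at this
      rw [show k - k = 0 by omega, hB0] at this
      rw [show k - (k - m) = m by omega] at this
      linarith
    · intro hω i hi
      rw [hwalk ω k le_rfl, hwalk ω i (le_of_lt hi)]
      rw [show k - k = 0 by omega, hB0]
      have := hω (k - i) (by omega) (by omega)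
      linarith
  rw [htrans, hev, strictpos_eq hBM k]

/-- the event that the walk attains its strict-from-the-left minimum over `[0,N]` at `k` -/
def Dset (B : ℝ → Ω → ℝ) (N k : ℕ) : Set Ω :=
  {ω | (∀ i : ℕ, i < k → B ((k : ℕ) : ℝ) ω < B ((i : ℕ) : ℝ) ω) ∧
       (∀ j : ℕ, k < j → j ≤ N → B ((k : ℕ) : ℝ) ω ≤ B ((j : ℕ) : ℝ) ω)}

lemma measurableSet_Dset (hBM : IsStandardBM μ B) (N k : ℕ) : MeasurableSet (Dset B N k) := by
  have : Dset B N k =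
      (⋂ (i : ℕ), ⋂ (_ : i < k), {ω | B ((k : ℕ) : ℝ) ω < B ((i : ℕ) : ℝ) ω}) ∩
      (⋂ (j : ℕ), ⋂ (_ : k < j), ⋂ (_ : j ≤ N), {ω | B ((k : ℕ) : ℝ) ω ≤ B ((j : ℕ) : ℝ) ω}) := by
    ext ω; simp only [Dset, Set.mem_setOf_eq, Set.mem_inter_iff, Set.mem_iInter]
  rw [this]
  refine MeasurableSet.inter ?_ ?_
  · exact MeasurableSet.iInter fun i => MeasurableSet.iInter fun _ =>
      measurableSet_lt (hBM.2.2.1 _) (hBM.2.2.1 _)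
  · exact MeasurableSet.iInter fun j => MeasurableSet.iInter fun _ =>
      MeasurableSet.iInter fun _ => measurableSet_le (hBM.2.2.1 _) (hBM.2.2.1 _)

lemma Dset_cover (N : ℕ) (ω : Ω) : ∃ k, k ≤ N ∧ ω ∈ Dset B N k := by
  have hex : ∃ k, k ≤ N ∧ ∀ i : ℕ, i ≤ N → B ((k : ℕ) : ℝ) ω ≤ B ((i : ℕ) : ℝ) ω := by
    obtain ⟨k0, hk0mem, hk0⟩ := Finset.exists_min_image (Finset.range (N+1))
      (fun k => B ((k : ℕ) : ℝ) ω) ⟨0, Finset.mem_range.mpr (by omega)⟩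
    exact ⟨k0, Nat.lt_succ_iff.mp (Finset.mem_range.mp hk0mem),
      fun i hi => hk0 i (Finset.mem_range.mpr (by omega))⟩
  classical
  set k1 := Nat.find hex with hk1
  have hspec := Nat.find_spec hex
  refine ⟨k1, hspec.1, ?_, fun j hj1 hj2 => hspec.2 j hj2⟩
  intro i hi
  have hnot := Nat.find_min hex hi
  push_neg at hnot
  obtain ⟨j, hj, hlt⟩ := hnot (by omega)
  exact lt_of_le_of_lt (hspec.2 j hj) hlt

lemma Dset_disjoint (N : ℕ) {k l : ℕ} (hkl : k < l) (hlN : l ≤ N) :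
    Dset B N k ∩ Dset B N l = (∅ : Set Ω) := by
  ext ω
  simp only [Set.mem_inter_iff, Set.mem_empty_iff_false, iff_false]
  rintro ⟨⟨hk1, hk2⟩, ⟨hl1, hl2⟩⟩
  have h1 := hl1 k hkl
  have h2 := hk2 l hkl hlN
  linarith

/-- `D_k` factorizes into reversal shape times staying shape -/
lemma Dset_measure (hBM : IsStandardBM μ B) (N k : ℕ) (hk : k ≤ N) :
    μ (Dset B N k) = muPi k (RevShape k) * muPi (N - k) (Aset (N - k) 0 0) := by
  have hsplit : Dset B N k
      = XiT B 0 k ⁻¹' RevShape k ∩ XiT B k (N - k) ⁻¹' (Aset (N - k) 0 0) := by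
    ext ω
    simp only [Dset, Set.mem_inter_iff, Set.mem_preimage, Set.mem_setOf_eq, RevShape, Aset]
    constructor
    · rintro ⟨h1, h2⟩
      constructor
      · intro i hi
        rw [Sfun_XiT_zero hBM k ω le_rfl, Sfun_XiT_zero hBM k ω (le_of_lt hi)]
        have := h1 i hi
        linarith
      · intro m hm1 hm2
        rw [Sfun_XiT hBM k (N - k) ω hm2, zero_mul, add_zero]
        have := h2 (k + m) (by omega) (by omega)
        linarith
    · rintro ⟨h1, h2⟩
      constructor
      · intro i hi
        have := h1 i hi
        rw [Sfun_XiT_zero hBM k ω le_rfl, Sfun_XiT_zero hBM k ω (le_of_lt hi)] at this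
        linarith
      · intro j hj1 hj2
        have := h2 (j - k) (by omega) (by omega)
        rw [Sfun_XiT hBM k (N - k) ω (by omega : j - k ≤ N - k), zero_mul, add_zero] at this
        rw [show k + (j - k) = j by omega] at this
        linarith
  have hindep := indepFun_XiT_XiT hBM 0 k (N - k)
  rw [Nat.zero_add] at hindep
  rw [hsplit,
    (indepFun_iff_measure_inter_preimage_eq_mul.mp hindep) _ _
      (measurableSet_RevShape k) (measurableSet_Aset (N - k) 0 0)]
  congr 1
  · exact measure_tuple_preimage _ (iIndepFun_XiT hBM 0 k)
      (fun i => measurable_XiT_coord hBM 0 k i) (fun i => XiT_coord_law hBM 0 k i)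
      (measurableSet_RevShape k)
  · exact measure_tuple_preimage _ (iIndepFun_XiT hBM k (N - k))
      (fun i => measurable_XiT_coord hBM k (N - k) i) (fun i => XiT_coord_law hBM k (N - k) i)
      (measurableSet_Aset (N - k) 0 0)

/-- the cycle identity -/
lemma cycle_identity (hBM : IsStandardBM μ B) (N : ℕ) :
    ∑ k ∈ Finset.range (N + 1), q k * q (N - k) = 1 := by
  have hcover : (⋃ k ∈ Finset.range (N + 1), Dset B N k) = Set.univ := by
    ext ω
    simp only [Set.mem_iUnion, Set.mem_univ, iff_true]
    obtain ⟨k, hk, hmem⟩ := Dset_cover N ω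
    exact ⟨k, Finset.mem_range.mpr (by omega), hmem⟩
  have hdisj : (↑(Finset.range (N + 1)) : Set ℕ).PairwiseDisjoint (Dset B N) := by
    intro k hk l hl hkl
    have hkN : k ≤ N := Nat.lt_succ_iff.mp (Finset.mem_range.mp (Finset.mem_coe.mp hk))
    have hlN : l ≤ N := Nat.lt_succ_iff.mp (Finset.mem_range.mp (Finset.mem_coe.mp hl))
    rcases lt_or_gt_of_ne hkl with h | h
    · exact Set.disjoint_iff_inter_eq_empty.mpr (Dset_disjoint N h hlN)
    · exact (Set.disjoint_iff_inter_eq_empty.mpr (Dset_disjoint N h hkN)).symm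
  have hsum : ∑ k ∈ Finset.range (N + 1), μ (Dset B N k) = 1 := by
    rw [← measure_biUnion_finset hdisj (fun k _ => measurableSet_Dset hBM N k), hcover,
      measure_univ]
  calc ∑ k ∈ Finset.range (N + 1), q k * q (N - k)
      = ∑ k ∈ Finset.range (N + 1), μ (Dset B N k) := by
        apply Finset.sum_congr rfl
        intro k hk
        rw [Dset_measure hBM N k (Nat.lt_succ_iff.mp (Finset.mem_range.mp hk)),
          rev_eq hBM k, strict_eq_q hBM k]
        rfl
    _ = 1 := hsum


lemma q_le_one (m : ℕ) : q m ≤ 1 := prob_le_one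

lemma q_mono (hBM : IsStandardBM μ B) {n N : ℕ} (h : n ≤ N) : q N ≤ q n := by
  have h1 := stay_eq hBM 0 N (0:ℝ)
  have h2 := stay_eq hBM 0 n (0:ℝ)
  rw [show q N = muPi N (Aset N 0 0) from rfl, ← h1,
    show q n = muPi n (Aset n 0 0) from rfl, ← h2]
  apply measure_mono
  intro ω hω k h1' h2'
  exact hω k h1' (le_trans h2' h)

/-- the Sparre-Andersen type bound -/
lemma q_bound (hBM : IsStandardBM μ B) (N : ℕ) :
    (q N).toReal ≤ 1 / Real.sqrt (N + 1) := by
  have hid := cycle_identity hBM N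
  have hterm : ∀ k ∈ Finset.range (N + 1), q N * q N ≤ q k * q (N - k) := by
    intro k hk
    have hkN : k ≤ N := Nat.lt_succ_iff.mp (Finset.mem_range.mp hk)
    exact mul_le_mul' (q_mono hBM hkN) (q_mono hBM (Nat.sub_le N k))
  have hsum : (N + 1 : ℝ≥0∞) * (q N * q N) ≤ 1 := by
    calc (N + 1 : ℝ≥0∞) * (q N * q N)
        = ∑ _k ∈ Finset.range (N + 1), q N * q N := by
          rw [Finset.sum_const, Finset.card_range, nsmul_eq_mul]
          push_cast
          ring
      _ ≤ ∑ k ∈ Finset.range (N + 1), q k * q (N - k) := Finset.sum_le_sum hterm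
      _ = 1 := hid
  -- convert to reals
  have hfin : q N ≠ ⊤ := measure_ne_top _ _
  set r := (q N).toReal with hr
  have hr0 : 0 ≤ r := ENNReal.toReal_nonneg
  have hreal : (N + 1 : ℝ) * (r * r) ≤ 1 := by
    have := ENNReal.toReal_mono (by norm_num) hsum
    rw [ENNReal.toReal_mul, ENNReal.toReal_mul] at this
    rw [ENNReal.toReal_add (by simp) (by simp)] at this
    simpa using this
  have hpos : (0:ℝ) < N + 1 := by positivity
  have hsq : r ^ 2 ≤ 1 / (N + 1) := by
    rw [le_div_iff₀ hpos]
    nlinarith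
  calc r = Real.sqrt (r ^ 2) := (Real.sqrt_sq hr0).symm
    _ ≤ Real.sqrt (1 / (N + 1)) := Real.sqrt_le_sqrt hsq
    _ = 1 / Real.sqrt (N + 1) := by
      rw [one_div, one_div, Real.sqrt_inv]

/-! ### Gaussian tail lower bounds -/

def deltaIic : ℝ≥0∞ := mu1 (Set.Iic (-1))
def deltaIci : ℝ≥0∞ := mu1 (Set.Ici 1)

lemma gaussianPDF_support : Function.support (gaussianPDF 0 1) = Set.univ :=
  Set.eq_univ_of_forall fun x => (gaussianPDF_pos 0 one_ne_zero x).ne'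

lemma mu1_set_pos {s : Set ℝ} (hs : MeasurableSet s) (hvol : volume s = ⊤) :
    0 < mu1 s := by
  unfold mu1
  rw [gaussianReal_of_var_ne_zero _ one_ne_zero, withDensity_apply _ hs]
  rw [lintegral_pos_iff_support (measurable_gaussianPDF 0 1)]
  rw [gaussianPDF_support, Measure.restrict_apply MeasurableSet.univ, Set.univ_inter, hvol]
  exact ENNReal.zero_lt_top

lemma mu1_Iic_pos : 0 < deltaIic :=
  mu1_set_pos measurableSet_Iic Real.volume_Iic

lemma mu1_Ici_pos : 0 < deltaIci :=
  mu1_set_pos measurableSet_Ici Real.volume_Ici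

lemma gauss_scale (L : ℕ) :
    gaussianReal 0 (Real.toNNReal (L:ℝ))
      = Measure.map (fun x : ℝ => Real.sqrt L * x) mu1 := by
  unfold mu1
  rw [gaussianReal_map_const_mul, mul_zero]
  congr 1
  ext
  simp only [NNReal.coe_mul, NNReal.coe_mk, NNReal.coe_one, mul_one]
  rw [Real.sq_sqrt (by positivity : (0:ℝ) ≤ (L:ℝ)), Real.coe_toNNReal _ (by positivity)]

lemma gauss_Iic_lower (L : ℕ) (b : ℝ) (hb : 0 ≤ b) (hL : (b+1)^2 ≤ (L:ℝ)) :
    deltaIic ≤ gaussianReal 0 (Real.toNNReal (L:ℝ)) (Set.Iic (-(b+1))) := by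
  rw [gauss_scale L, Measure.map_apply (measurable_const_mul _) measurableSet_Iic]
  apply measure_mono
  intro x hx
  have hx1 : x ≤ -1 := hx
  have hsq : b + 1 ≤ Real.sqrt L := by
    rw [show (L:ℝ) = Real.sqrt L ^ 2 by rw [Real.sq_sqrt (by positivity)]] at hL
    nlinarith [Real.sqrt_nonneg (L:ℝ)]
  simp only [Set.mem_preimage, Set.mem_Iic]
  nlinarith [Real.sqrt_nonneg (L:ℝ)]

lemma gauss_Ici_lower (L : ℕ) (b : ℝ) (hb : 0 ≤ b) (hL : (b+1)^2 ≤ (L:ℝ)) :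
    deltaIci ≤ gaussianReal 0 (Real.toNNReal (L:ℝ)) (Set.Ici (b+1)) := by
  rw [gauss_scale L, Measure.map_apply (measurable_const_mul _) measurableSet_Ici]
  apply measure_mono
  intro x hx
  have hx1 : (1:ℝ) ≤ x := hx
  have hsq : b + 1 ≤ Real.sqrt L := by
    rw [show (L:ℝ) = Real.sqrt L ^ 2 by rw [Real.sq_sqrt (by positivity)]] at hL
    nlinarith [Real.sqrt_nonneg (L:ℝ)]
  simp only [Set.mem_preimage, Set.mem_Ici]
  nlinarith [Real.sqrt_nonneg (L:ℝ)]

/-- the prepending argument: staying above a negative level -/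
lemma p_bound (hBM : IsStandardBM μ B) (n : ℕ) (b : ℝ) (hb : 0 ≤ b) :
    (muPi n (Aset n (-b) 0)).toReal
      ≤ (2 * ((b+1)^2 + 1) + 1) / (deltaIic.toReal * deltaIci.toReal) / Real.sqrt (n+1) := by
  classical
  set L := Nat.ceil ((b+1)^2) with hLdef
  have hL1 : (b+1)^2 ≤ (L:ℝ) := Nat.le_ceil _
  have hLb : (L:ℝ) ≤ (b+1)^2 + 1 := le_of_lt (Nat.ceil_lt_add_one (by positivity))
  set N := L + L + n with hNdef
  -- the prepended event, in terms of B
  set E : Set Ω := {ω | B ((L:ℕ):ℝ) ω ≤ -(b+1) ∧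
      (b+1 ≤ B ((L+L:ℕ):ℝ) ω - B ((L:ℕ):ℝ) ω) ∧
      (∀ m : ℕ, 1 ≤ m → m ≤ n → -b ≤ B ((L+L+m:ℕ):ℝ) ω - B ((L+L:ℕ):ℝ) ω)} with hEdef
  -- E factorizes
  set sA : Set (Fin L → ℝ) := {z | Sfun z L ≤ -(b+1)} with hsA
  have hsAm : MeasurableSet sA := measurableSet_le (measurable_Sfun L) measurable_const
  set sB : Set (Fin (L+n) → ℝ) := {z | b+1 ≤ Sfun z L ∧
      ∀ m : ℕ, 1 ≤ m → m ≤ n → -b ≤ Sfun z (L+m) - Sfun z L} with hsB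
  have hsBm : MeasurableSet sB := by
    have : sB = {z : Fin (L+n) → ℝ | b+1 ≤ Sfun z L} ∩
        ⋂ (m : ℕ), ⋂ (_ : 1 ≤ m), ⋂ (_ : m ≤ n),
          {z : Fin (L+n) → ℝ | -b ≤ Sfun z (L+m) - Sfun z L} := by
      ext z; simp [hsB, Set.mem_iInter]
    rw [this]
    exact (measurableSet_le measurable_const (measurable_Sfun L)).inter
      (MeasurableSet.iInter fun m => MeasurableSet.iInter fun _ =>
        MeasurableSet.iInter fun _ =>
          measurableSet_le measurable_const ((measurable_Sfun _).sub (measurable_Sfun _)))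
  set sC : Set (Fin L → ℝ) := {z | b+1 ≤ Sfun z L} with hsC
  have hsCm : MeasurableSet sC := measurableSet_le measurable_const (measurable_Sfun L)
  have hE1 : E = XiT B 0 L ⁻¹' sA ∩ XiT B L (L+n) ⁻¹' sB := by
    ext ω
    simp only [hEdef, Set.mem_setOf_eq, Set.mem_inter_iff, Set.mem_preimage, hsA, hsB]
    constructor
    · rintro ⟨h1, h2, h3⟩
      refine ⟨by rwa [Sfun_XiT_zero hBM L ω le_rfl], ?_, ?_⟩
      · rw [Sfun_XiT hBM L (L+n) ω (by omega : L ≤ L + n)]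
        exact h2
      · intro m hm1 hm2
        rw [Sfun_XiT hBM L (L+n) ω (by omega : L + m ≤ L + n),
          Sfun_XiT hBM L (L+n) ω (by omega : L ≤ L + n)]
        have := h3 m hm1 hm2
        rw [show L + (L + m) = L + L + m by omega]
        linarith
    · rintro ⟨h1, h2, h3⟩
      rw [Sfun_XiT_zero hBM L ω le_rfl] at h1
      rw [Sfun_XiT hBM L (L+n) ω (by omega : L ≤ L + n)] at h2
      refine ⟨h1, h2, ?_⟩
      intro m hm1 hm2
      have := h3 m hm1 hm2
      rw [Sfun_XiT hBM L (L+n) ω (by omega : L + m ≤ L + n),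
        Sfun_XiT hBM L (L+n) ω (by omega : L ≤ L + n),
        show L + (L + m) = L + L + m by omega] at this
      linarith
  -- split outer
  have hindep1 := indepFun_XiT_XiT hBM 0 L (L+n)
  rw [Nat.zero_add] at hindep1
  have hmuE : μ E = muPi L sA * muPi (L+n) sB := by
    rw [hE1, (indepFun_iff_measure_inter_preimage_eq_mul.mp hindep1) _ _ hsAm hsBm]
    congr 1
    · exact measure_tuple_preimage _ (iIndepFun_XiT hBM 0 L)
        (fun i => measurable_XiT_coord hBM 0 L i) (fun i => XiT_coord_law hBM 0 L i) hsAm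
    · exact measure_tuple_preimage _ (iIndepFun_XiT hBM L (L+n))
        (fun i => measurable_XiT_coord hBM L (L+n) i) (fun i => XiT_coord_law hBM L (L+n) i) hsBm
  -- split inner
  have hsB_split : muPi (L+n) sB = muPi L sC * muPi n (Aset n (-b) 0) := by
    have hbridge : muPi (L+n) sB = μ (XiT B 0 (L+n) ⁻¹' sB) :=
      (measure_tuple_preimage _ (iIndepFun_XiT hBM 0 (L+n))
        (fun i => measurable_XiT_coord hBM 0 (L+n) i)
        (fun i => XiT_coord_law hBM 0 (L+n) i) hsBm).symm
    have hev : XiT B 0 (L+n) ⁻¹' sB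
        = XiT B 0 L ⁻¹' sC ∩ XiT B L n ⁻¹' (Aset n (-b) 0) := by
      ext ω
      simp only [Set.mem_preimage, Set.mem_inter_iff, hsB, hsC, Aset, Set.mem_setOf_eq]
      constructor
      · rintro ⟨h1, h2⟩
        rw [Sfun_XiT_zero hBM (L+n) ω (by omega : L ≤ L + n)] at h1
        refine ⟨by rwa [Sfun_XiT_zero hBM L ω le_rfl], ?_⟩
        intro m hm1 hm2
        have := h2 m hm1 hm2
        rw [Sfun_XiT_zero hBM (L+n) ω (by omega : L + m ≤ L + n),
          Sfun_XiT_zero hBM (L+n) ω (by omega : L ≤ L + n)] at this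
        rw [Sfun_XiT hBM L n ω hm2, zero_mul, add_zero]
        linarith
      · rintro ⟨h1, h2⟩
        rw [Sfun_XiT_zero hBM L ω le_rfl] at h1
        refine ⟨by rwa [Sfun_XiT_zero hBM (L+n) ω (by omega : L ≤ L + n)], ?_⟩
        intro m hm1 hm2
        have := h2 m hm1 hm2
        rw [Sfun_XiT hBM L n ω hm2, zero_mul, add_zero] at this
        rw [Sfun_XiT_zero hBM (L+n) ω (by omega : L + m ≤ L + n),
          Sfun_XiT_zero hBM (L+n) ω (by omega : L ≤ L + n)]
        linarith
    have hindep2 := indepFun_XiT_XiT hBM 0 L n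
    rw [Nat.zero_add] at hindep2
    rw [hbridge, hev,
      (indepFun_iff_measure_inter_preimage_eq_mul.mp hindep2) _ _ hsCm
        (measurableSet_Aset n (-b) 0)]
    congr 1
    · exact measure_tuple_preimage _ (iIndepFun_XiT hBM 0 L)
        (fun i => measurable_XiT_coord hBM 0 L i) (fun i => XiT_coord_law hBM 0 L i) hsCm
    · exact measure_tuple_preimage _ (iIndepFun_XiT hBM L n)
        (fun i => measurable_XiT_coord hBM L n i) (fun i => XiT_coord_law hBM L n i)
        (measurableSet_Aset n (-b) 0)
  -- Gaussian values of the two block events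
  have hval1 : muPi L sA = gaussianReal 0 (Real.toNNReal (L:ℝ)) (Set.Iic (-(b+1))) := by
    have h1 : muPi L sA = μ (XiT B 0 L ⁻¹' sA) :=
      (measure_tuple_preimage _ (iIndepFun_XiT hBM 0 L)
        (fun i => measurable_XiT_coord hBM 0 L i) (fun i => XiT_coord_law hBM 0 L i) hsAm).symm
    have h2 : XiT B 0 L ⁻¹' sA = (fun ω => B ((L:ℕ):ℝ) ω) ⁻¹' Set.Iic (-(b+1)) := by
      ext ω
      simp only [Set.mem_preimage, hsA, Set.mem_setOf_eq, Set.mem_Iic]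
      rw [Sfun_XiT_zero hBM L ω le_rfl]
    rw [h1, h2, ← Measure.map_apply (hBM.2.2.1 _) measurableSet_Iic, B_nat_law hBM L]
  have hval2 : muPi L sC = gaussianReal 0 (Real.toNNReal (L:ℝ)) (Set.Ici (b+1)) := by
    have h1 : muPi L sC = μ (XiT B 0 L ⁻¹' sC) :=
      (measure_tuple_preimage _ (iIndepFun_XiT hBM 0 L)
        (fun i => measurable_XiT_coord hBM 0 L i) (fun i => XiT_coord_law hBM 0 L i) hsCm).symm
    have h2 : XiT B 0 L ⁻¹' sC = (fun ω => B ((L:ℕ):ℝ) ω) ⁻¹' Set.Ici (b+1) := by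
      ext ω
      simp only [Set.mem_preimage, hsC, Set.mem_setOf_eq, Set.mem_Ici]
      rw [Sfun_XiT_zero hBM L ω le_rfl]
    rw [h1, h2, ← Measure.map_apply (hBM.2.2.1 _) measurableSet_Ici, B_nat_law hBM L]
  -- inclusion into the union of Dsets
  have hincl : E ⊆ ⋃ k ∈ Finset.range (L + L + 1), Dset B N k := by
    intro ω hω
    obtain ⟨h1, h2, h3⟩ := hω
    obtain ⟨k0, hk0N, hk0⟩ := Dset_cover (B := B) N ω
    simp only [Set.mem_iUnion]
    by_cases hk0small : k0 ≤ L + L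
    · exact ⟨k0, Finset.mem_range.mpr (by omega), hk0⟩
    · exfalso
      push_neg at hk0small
      obtain ⟨hd1, hd2⟩ := hk0
      have hBk0 : B ((k0:ℕ):ℝ) ω < B ((L:ℕ):ℝ) ω := hd1 L (by omega)
      have hm := h3 (k0 - (L+L)) (by omega) (by omega)
      rw [show L + L + (k0 - (L+L)) = k0 by omega] at hm
      linarith
  -- summing
  have hsumbound : μ E ≤ (L + L + 1 : ℝ≥0∞) * q n := by
    calc μ E ≤ μ (⋃ k ∈ Finset.range (L + L + 1), Dset B N k) := measure_mono hincl
      _ ≤ ∑ k ∈ Finset.range (L + L + 1), μ (Dset B N k) := measure_biUnion_finset_le _ _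
      _ = ∑ k ∈ Finset.range (L + L + 1), q k * q (N - k) := by
          apply Finset.sum_congr rfl
          intro k hk
          rw [Dset_measure hBM N k (by
            have := Finset.mem_range.mp hk; omega), rev_eq hBM k, strict_eq_q hBM k]
          rfl
      _ ≤ ∑ _k ∈ Finset.range (L + L + 1), 1 * q n := by
          apply Finset.sum_le_sum
          intro k hk
          have hkr := Finset.mem_range.mp hk
          exact mul_le_mul' (q_le_one k) (q_mono hBM (by omega : n ≤ N - k))
      _ = (L + L + 1 : ℝ≥0∞) * q n := by
          rw [Finset.sum_const, Finset.card_range, nsmul_eq_mul, one_mul]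
          push_cast
          ring
  -- lower bound for μ E
  have hlower : deltaIic * (deltaIci * muPi n (Aset n (-b) 0)) ≤ μ E := by
    rw [hmuE, hsB_split, hval1, hval2]
    exact mul_le_mul' (gauss_Iic_lower L b hb hL1)
      (mul_le_mul' (gauss_Ici_lower L b hb hL1) le_rfl)
  -- to reals
  have hq := q_bound hBM n
  set d1 := deltaIic.toReal with hd1def
  set d2 := deltaIci.toReal with hd2def
  have hd1pos : 0 < d1 := ENNReal.toReal_pos (ne_of_gt mu1_Iic_pos) (measure_ne_top _ _)
  have hd2pos : 0 < d2 := ENNReal.toReal_pos (ne_of_gt mu1_Ici_pos) (measure_ne_top _ _)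
  have hcombined : deltaIic * (deltaIci * muPi n (Aset n (-b) 0)) ≤ (L + L + 1 : ℝ≥0∞) * q n :=
    le_trans hlower hsumbound
  have hreal : d1 * (d2 * (muPi n (Aset n (-b) 0)).toReal) ≤ (L + L + 1 : ℝ) * (q n).toReal := by
    have hrhsne : ((L + L + 1 : ℝ≥0∞) * q n) ≠ ⊤ :=
      ENNReal.mul_ne_top (by simp) (measure_ne_top _ _)
    have := ENNReal.toReal_mono hrhsne hcombined
    rw [ENNReal.toReal_mul, ENNReal.toReal_mul, ENNReal.toReal_mul] at this
    convert this using 2 <;> simp [ENNReal.toReal_add]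
  have hsqrtpos : 0 < Real.sqrt (n+1) := Real.sqrt_pos.mpr (by positivity)
  have hqr : (L + L + 1 : ℝ) * (q n).toReal ≤ (2 * ((b+1)^2 + 1) + 1) / Real.sqrt (n+1) := by
    have hLL : (L + L + 1 : ℝ) ≤ 2 * ((b+1)^2 + 1) + 1 := by
      push_cast
      linarith
    have hqn : (q n).toReal ≤ 1 / Real.sqrt (n+1) := hq
    have hqn0 : 0 ≤ (q n).toReal := ENNReal.toReal_nonneg
    calc (L + L + 1 : ℝ) * (q n).toReal ≤ (2 * ((b+1)^2 + 1) + 1) * (1 / Real.sqrt (n+1)) := by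
          apply mul_le_mul hLL hqn hqn0 (by positivity)
      _ = (2 * ((b+1)^2 + 1) + 1) / Real.sqrt (n+1) := by ring
  rw [div_div]
  rw [le_div_iff₀ (by positivity)]
  calc (muPi n (Aset n (-b) 0)).toReal * (d1 * d2 * Real.sqrt (n+1))
      = (d1 * (d2 * (muPi n (Aset n (-b) 0)).toReal)) * Real.sqrt (n+1) := by ring
    _ ≤ ((2 * ((b+1)^2 + 1) + 1) / Real.sqrt (n+1)) * Real.sqrt (n+1) := by
        apply mul_le_mul_of_nonneg_right (le_trans hreal hqr) (le_of_lt hsqrtpos)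
    _ = 2 * ((b+1)^2 + 1) + 1 := by
        field_simp

/-- polynomial dominated by exponential -/
lemma poly_le_exp {y : ℝ} (hy : y ≤ 0) : 2 * (((-y)+1)^2 + 1) + 1 ≤ 5 * rexp (-2*y) := by
  set t := -y with ht
  have ht0 : 0 ≤ t := by linarith
  have h1 : 1 + t ≤ rexp t := by
    have := Real.add_one_le_exp t
    linarith
  have h2 : rexp (-2*y) = rexp t * rexp t := by
    rw [← Real.exp_add]; congr 1; rw [ht]; ring
  nlinarith [Real.exp_nonneg t, sq_nonneg t]

end BMAux

open BMAux

/-- Subcritical Brownian estimate: against a drift `−h < 0`, the probability that the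
drifted Brownian motion stays above an independent Gaussian level (with bounded mean and
variance) up to time `T ≥ C` is at most `(C/√T)·e^{−c h² T}`. -/
theorem bm_stay_above_gaussian_level_subcritical (K : ℝ) (hK : 0 < K) :
    ∃ C c : ℝ, 0 < C ∧ 0 < c ∧
      ∀ (Ω : Type) (_ : MeasurableSpace Ω) (μ : Measure Ω), IsProbabilityMeasure μ →
      ∀ (B : ℝ → Ω → ℝ), IsStandardBM μ B →
      ∀ h : ℝ, 0 < h →
      ∀ (X : Ω → ℝ), Measurable X →
      ∀ (mX : ℝ) (vX : ℝ≥0), |mX| ≤ K → (vX : ℝ) ≤ K →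
        Measure.map X μ = gaussianReal mX vX →
        IndepFun X (fun ω => fun t : ℝ => B t ω) μ →
      ∀ T : ℝ, C ≤ T →
        (μ {ω | ∀ t ∈ Set.Icc (0 : ℝ) T, X ω ≤ B t ω - h * t}).toReal
          ≤ (C / Real.sqrt T) * Real.exp (-(c * h ^ 2 * T)) := by
  have hd1pos : 0 < deltaIic.toReal := ENNReal.toReal_pos (ne_of_gt mu1_Iic_pos) (measure_ne_top _ _)
  have hd2pos : 0 < deltaIci.toReal := ENNReal.toReal_pos (ne_of_gt mu1_Ici_pos) (measure_ne_top _ _)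
  set D : ℝ := deltaIic.toReal * deltaIci.toReal with hDdef
  have hDpos : 0 < D := mul_pos hd1pos hd2pos
  refine ⟨max (5 * Real.exp (8*K) / D) (8*K + 2), 1/8,
    lt_of_lt_of_le (by linarith) (le_max_right _ _), by norm_num, ?_⟩
  intro Ω mΩ μ hμ B hBM h hh X hX mX vX hmX hvX hXlaw hindep T hT
  set C : ℝ := max (5 * Real.exp (8*K) / D) (8*K + 2) with hCdef
  have hT2 : (2:ℝ) ≤ T := le_trans (by linarith [le_max_right (5 * Real.exp (8*K) / D) (8*K + 2)]) hT
  have hT8K : 8*K + 2 ≤ T := le_trans (le_max_right _ _) hT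
  set n : ℕ := Nat.floor T with hndef
  have hTpos : (0:ℝ) < T := by linarith
  have hnT : (n:ℝ) ≤ T := Nat.floor_le (le_of_lt hTpos)
  have hTn1 : T < (n:ℝ) + 1 := Nat.lt_floor_add_one T
  have hn1 : 1 ≤ n := by
    rw [hndef]
    exact (Nat.one_le_floor_iff T).mpr (by linarith)
  -- Part A: reduce to the integer grid event
  set E := {ω | ∀ t ∈ Set.Icc (0:ℝ) T, X ω ≤ B t ω - h * t} with hEdef
  set E2 := {ω | X ω ≤ 0 ∧ ∀ k : ℕ, 1 ≤ k → k ≤ n → X ω + h * k ≤ B ((k:ℕ):ℝ) ω} with hE2def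
  have hsub : E ⊆ E2 := by
    intro ω hω
    constructor
    · have h0 := hω 0 (Set.mem_Icc.mpr ⟨le_rfl, le_of_lt hTpos⟩)
      rw [hBM.1 ω] at h0
      simpa using h0
    · intro k hk1 hk2
      have hkn : ((k:ℕ):ℝ) ≤ (n:ℝ) := by exact_mod_cast hk2
      have hkT : ((k:ℕ):ℝ) ≤ T := le_trans hkn hnT
      have := hω ((k:ℕ):ℝ) (Set.mem_Icc.mpr ⟨by positivity, hkT⟩)
      linarith
  have hmono0 : (μ E).toReal ≤ (μ E2).toReal :=
    ENNReal.toReal_mono (measure_ne_top μ _) (measure_mono hsub)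
  -- Part B: the law of (X, increments)
  have hΦm : Measurable (fun g : ℝ → ℝ =>
      fun i : Fin n => g ((0 + i.val + 1 : ℕ):ℝ) - g ((0 + i.val : ℕ):ℝ)) :=
    measurable_pi_lambda _ fun i => ((measurable_pi_apply _).sub (measurable_pi_apply _))
  have hXiTindep : IndepFun X (XiT B 0 n) μ := hindep.comp measurable_id hΦm
  have hXiTlaw : Measure.map (XiT B 0 n) μ = muPi n :=
    map_tuple_eq_muPi (fun i ω => XiT B 0 n ω i) (iIndepFun_XiT hBM 0 n)
      (fun i => measurable_XiT_coord hBM 0 n i) (fun i => XiT_coord_law hBM 0 n i)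
  have hpair : Measure.map (fun ω => (X ω, XiT B 0 n ω)) μ
      = (gaussianReal mX vX).prod (muPi n) := by
    rw [← hXlaw, ← hXiTlaw]
    exact (indepFun_iff_map_prod_eq_prod_map_map hX.aemeasurable
      (measurable_XiT hBM 0 n).aemeasurable).mp hXiTindep
  set Aprod : Set (ℝ × (Fin n → ℝ)) :=
    {p | p.1 ≤ 0 ∧ ∀ k : ℕ, 1 ≤ k → k ≤ n → p.1 + h * k ≤ Sfun p.2 k} with hAprod
  have hAprodm : MeasurableSet Aprod := by
    have : Aprod = {p : ℝ × (Fin n → ℝ) | p.1 ≤ 0} ∩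
        ⋂ (k : ℕ), ⋂ (_ : 1 ≤ k), ⋂ (_ : k ≤ n),
          {p : ℝ × (Fin n → ℝ) | p.1 + h*k ≤ Sfun p.2 k} := by
      ext p; simp [hAprod, Set.mem_iInter]
    rw [this]
    exact (measurableSet_le measurable_fst measurable_const).inter
      (MeasurableSet.iInter fun k => MeasurableSet.iInter fun _ => MeasurableSet.iInter fun _ =>
        measurableSet_le (measurable_fst.add_const _) ((measurable_Sfun k).comp measurable_snd))
  have hE2eq : E2 = (fun ω => (X ω, XiT B 0 n ω)) ⁻¹' Aprod := by
    ext ω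
    simp only [hE2def, hAprod, Set.mem_setOf_eq, Set.mem_preimage]
    constructor
    · rintro ⟨h1, h2⟩
      refine ⟨h1, fun k hk1 hk2 => ?_⟩
      rw [Sfun_XiT_zero hBM n ω hk2]
      exact h2 k hk1 hk2
    · rintro ⟨h1, h2⟩
      refine ⟨h1, fun k hk1 hk2 => ?_⟩
      have := h2 k hk1 hk2
      rwa [Sfun_XiT_zero hBM n ω hk2] at this
  have hmuE2 : μ E2 = ((gaussianReal mX vX).prod (muPi n)) Aprod := by
    rw [hE2eq, ← Measure.map_apply (hX.prodMk (measurable_XiT hBM 0 n)) hAprodm, hpair]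
  -- Part C: disintegrate and bound
  have hprodapply : ((gaussianReal mX vX).prod (muPi n)) Aprod
      = ∫⁻ y, muPi n (Prod.mk y ⁻¹' Aprod) ∂(gaussianReal mX vX) := Measure.prod_apply hAprodm
  have hsec : ∀ y : ℝ, Prod.mk y ⁻¹' Aprod = if y ≤ 0 then Aset n y h else ∅ := by
    intro y
    ext z
    by_cases hy : y ≤ 0 <;> simp [hAprod, Aset, hy]
  set Cn : ℝ := 5 / D / Real.sqrt (n+1) * rexp (-((n:ℝ)*h^2/2)) with hCn
  have hCn0 : 0 ≤ Cn := by
    rw [hCn]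
    exact mul_nonneg (div_nonneg (div_nonneg (by norm_num) hDpos.le) (Real.sqrt_nonneg _))
      (Real.exp_nonneg _)
  have hkey : ∀ y : ℝ, muPi n (Prod.mk y ⁻¹' Aprod)
      ≤ ENNReal.ofReal (Cn * rexp ((-(h+2)) * y)) := by
    intro y
    rw [hsec y]
    by_cases hy : y ≤ 0
    · rw [if_pos hy]
      have htilt := tilt_bound n y h hy (le_of_lt hh)
      have hp : muPi n (Aset n y 0)
          ≤ ENNReal.ofReal (5 * rexp (-2*y) / D / Real.sqrt (n+1)) := by
        rw [ENNReal.le_ofReal_iff_toReal_le (measure_ne_top _ _)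
          (by
            have h5 : (0:ℝ) ≤ 5 * rexp (-2*y) := by positivity
            exact div_nonneg (div_nonneg h5 hDpos.le) (Real.sqrt_nonneg _))]
        have hpb := p_bound hBM n (-y) (by linarith)
        rw [neg_neg, ← hDdef] at hpb
        refine le_trans hpb ?_
        have hpoly := poly_le_exp hy
        have hsq : 0 < Real.sqrt ((n:ℝ)+1) := Real.sqrt_pos.mpr (by positivity)
        rw [div_div, div_div]
        exact (div_le_div_iff_of_pos_right (mul_pos hDpos hsq)).mpr hpoly
      calc muPi n (Aset n y h)
          ≤ ENNReal.ofReal (rexp (-(h*y) - n * h^2 / 2)) * muPi n (Aset n y 0) := htilt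
        _ ≤ ENNReal.ofReal (rexp (-(h*y) - n * h^2 / 2))
            * ENNReal.ofReal (5 * rexp (-2*y) / D / Real.sqrt (n+1)) := mul_le_mul_right hp _
        _ = ENNReal.ofReal (Cn * rexp ((-(h+2)) * y)) := by
            rw [← ENNReal.ofReal_mul (Real.exp_nonneg _)]
            congr 1
            have e1 : rexp (-(h*y) - (n:ℝ) * h^2 / 2)
                = rexp (-(h*y)) * rexp (-((n:ℝ)*h^2/2)) := by
              rw [← Real.exp_add]; ring_nf
            have e2 : rexp ((-(h+2)) * y) = rexp (-(h*y)) * rexp (-2*y) := by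
              rw [← Real.exp_add]; ring_nf
            rw [e1, e2, hCn]
            ring_nf
    · rw [if_neg hy, measure_empty]
      exact zero_le
  have hint : μ E2 ≤ ENNReal.ofReal Cn
      * ENNReal.ofReal (rexp ((-(h+2))*mX + (-(h+2))^2 * (vX:ℝ) / 2)) := by
    rw [hmuE2, hprodapply]
    calc ∫⁻ y, muPi n (Prod.mk y ⁻¹' Aprod) ∂(gaussianReal mX vX)
        ≤ ∫⁻ y, ENNReal.ofReal (Cn * rexp ((-(h+2))*y)) ∂(gaussianReal mX vX) :=
          lintegral_mono hkey
      _ = ∫⁻ y, ENNReal.ofReal Cn * ENNReal.ofReal (rexp ((-(h+2))*y))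
            ∂(gaussianReal mX vX) := by
          congr 1; ext y; rw [ENNReal.ofReal_mul hCn0]
      _ = ENNReal.ofReal Cn * ∫⁻ y, ENNReal.ofReal (rexp ((-(h+2))*y))
            ∂(gaussianReal mX vX) := lintegral_const_mul _ (measurable_ofReal_exp _)
      _ = ENNReal.ofReal Cn
          * ENNReal.ofReal (rexp ((-(h+2))*mX + (-(h+2))^2 * (vX:ℝ) / 2)) := by
          rw [lintegral_exp_gaussianReal]
  -- Part D: numerics
  have hfinal : Cn * rexp ((-(h+2))*mX + (-(h+2))^2 * (vX:ℝ) / 2)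
      ≤ (C / Real.sqrt T) * rexp (-(1/8 * h^2 * T)) := by
    have hsn : Real.sqrt T ≤ Real.sqrt ((n:ℝ)+1) := Real.sqrt_le_sqrt (by linarith)
    have hsTpos : 0 < Real.sqrt T := Real.sqrt_pos.mpr hTpos
    have hsn1pos : 0 < Real.sqrt ((n:ℝ)+1) := Real.sqrt_pos.mpr (by positivity)
    obtain ⟨hmX1, hmX2⟩ := abs_le.mp hmX
    have hn8K : 8*K ≤ (n:ℝ) := by linarith
    have hnT2 : T/2 ≤ (n:ℝ) := by linarith
    have hexple : -((n:ℝ)*h^2/2) + ((-(h+2))*mX + (-(h+2))^2 * (vX:ℝ) / 2)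
        ≤ 8*K + -(1/8 * h^2 * T) := by
      have e1 : (-(h+2))*mX ≤ (h+2)*K := by nlinarith
      have e2 : (-(h+2))^2 * (vX:ℝ) / 2 ≤ (h+2)^2*K/2 := by nlinarith [sq_nonneg (h+2)]
      have e3 : (h+2)*K + (h+2)^2*K/2 ≤ 2*K*h^2 + 8*K := by nlinarith [sq_nonneg (h-2), sq_nonneg h]
      have e4 : 2*K*h^2 ≤ (n:ℝ)*h^2/4 := by nlinarith [sq_nonneg h]
      have e5 : -((n:ℝ)*h^2/4) ≤ -(T*h^2/8) := by nlinarith [sq_nonneg h]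
      nlinarith [sq_nonneg h]
    calc Cn * rexp ((-(h+2))*mX + (-(h+2))^2 * (vX:ℝ) / 2)
        = 5 / D / Real.sqrt ((n:ℝ)+1)
          * rexp (-((n:ℝ)*h^2/2) + ((-(h+2))*mX + (-(h+2))^2 * (vX:ℝ) / 2)) := by
          rw [hCn, mul_assoc, ← Real.exp_add]
      _ ≤ 5 / D / Real.sqrt T * rexp (8*K + -(1/8 * h^2 * T)) := by
          have h1 : 5 / D / Real.sqrt ((n:ℝ)+1) ≤ 5 / D / Real.sqrt T :=
            div_le_div_of_nonneg_left (div_nonneg (by norm_num) hDpos.le) hsTpos hsn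
          exact mul_le_mul h1 (Real.exp_le_exp.mpr hexple) (Real.exp_nonneg _)
            (div_nonneg (div_nonneg (by norm_num) hDpos.le) (Real.sqrt_nonneg _))
      _ = (5 * Real.exp (8*K) / D) / Real.sqrt T * rexp (-(1/8 * h^2 * T)) := by
          rw [Real.exp_add]
          ring
      _ ≤ (C / Real.sqrt T) * rexp (-(1/8 * h^2 * T)) := by
          apply mul_le_mul_of_nonneg_right _ (Real.exp_nonneg _)
          exact (div_le_div_iff_of_pos_right hsTpos).mpr (le_max_left _ _)
  -- chain everything
  calc (μ E).toReal ≤ (μ E2).toReal := hmono0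
    _ ≤ (ENNReal.ofReal Cn
        * ENNReal.ofReal (rexp ((-(h+2))*mX + (-(h+2))^2 * (vX:ℝ) / 2))).toReal :=
      ENNReal.toReal_mono (ENNReal.mul_ne_top ENNReal.ofReal_ne_top ENNReal.ofReal_ne_top) hint
    _ = Cn * rexp ((-(h+2))*mX + (-(h+2))^2 * (vX:ℝ) / 2) := by
      rw [← ENNReal.ofReal_mul hCn0, ENNReal.toReal_ofReal
        (mul_nonneg hCn0 (Real.exp_nonneg _))]
    _ ≤ (C / Real.sqrt T) * rexp (-(1/8 * h^2 * T)) := hfinal
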